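/- Logarithmic sum bound for Adam second moments: let v_t = β₂ v_{t-1} + (1-β₂) m_t² with v_0 > 0 coordinatewise and 0 < β₂ < 1. Then for each coordinate i, Σ_{t=0}^{T-1} (1-β₂) m_{t,i}² / (v_{t,i} + ζ) ≤ ln(v_{T,i}/v_{0,i}) - T ln β₂ for any ζ ≥ 0. -/

import Mathlib

/-- Logarithmic sum bound for Adam second moments: if
`v_{t+1} = β₂ v_t + (1-β₂) m_{t+1}²` with `v_0 > 0` and `0 < β₂ < 1`, then for any
`ζ ≥ 0`, `∑_{t=0}^{T-1} (1-β₂) m_{t+1}²/(v_{t+1}+ζ) ≤ ln(v_T/v_0) - T ln β₂`. -/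
theorem adam_log_sum_bound (β₂ ζ : ℝ) (h0 : 0 < β₂) (h1 : β₂ < 1) (hζ : 0 ≤ ζ)
    (m v : ℕ → ℝ) (hv0 : 0 < v 0)
    (hrec : ∀ t : ℕ, v (t + 1) = β₂ * v t + (1 - β₂) * (m (t + 1)) ^ 2) (T : ℕ) :
    ∑ t ∈ Finset.range T, (1 - β₂) * (m (t + 1)) ^ 2 / (v (t + 1) + ζ)
      ≤ Real.log (v T / v 0) - T * Real.log β₂ := by
  have hvpos : ∀ t, 0 < v t := by
    intro t
    induction t with
    | zero => exact hv0
    | succ n ih =>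
      rw [hrec n]
      have : 0 < β₂ * v n := mul_pos h0 ih
      nlinarith [sq_nonneg (m (n + 1))]
  have key : ∀ t, (1 - β₂) * (m (t + 1)) ^ 2 / (v (t + 1) + ζ)
      ≤ Real.log (v (t + 1)) - Real.log (v t) - Real.log β₂ := by
    intro t
    have hb := hvpos (t + 1)
    have ha := hvpos t
    have h2 : (1 - β₂) * (m (t + 1)) ^ 2 / (v (t + 1) + ζ)
        ≤ (1 - β₂) * (m (t + 1)) ^ 2 / v (t + 1) := by
      apply div_le_div_of_nonneg_left _ hb (by linarith)
      nlinarith [sq_nonneg (m (t + 1))]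
    have hq : 0 < β₂ * v t / v (t + 1) := by positivity
    have hlog := Real.log_le_sub_one_of_pos hq
    have hlogeq : Real.log (β₂ * v t / v (t + 1))
        = Real.log β₂ + Real.log (v t) - Real.log (v (t + 1)) := by
      rw [Real.log_div (by positivity) (ne_of_gt hb), Real.log_mul (ne_of_gt h0) (ne_of_gt ha)]
    have h3 : (1 - β₂) * (m (t + 1)) ^ 2 / v (t + 1) = 1 - β₂ * v t / v (t + 1) := by
      field_simp
      linarith [hrec t]
    rw [hlogeq] at hlog
    linarith
  calc ∑ t ∈ Finset.range T, (1 - β₂) * (m (t + 1)) ^ 2 / (v (t + 1) + ζ)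
      ≤ ∑ t ∈ Finset.range T, (Real.log (v (t + 1)) - Real.log (v t) - Real.log β₂) :=
        Finset.sum_le_sum fun t _ => key t
    _ = (Real.log (v T) - Real.log (v 0)) - T * Real.log β₂ := by
        rw [Finset.sum_sub_distrib, Finset.sum_range_sub (fun i => Real.log (v i))]
        simp [mul_comm]
    _ = Real.log (v T / v 0) - T * Real.log β₂ := by
        rw [Real.log_div (ne_of_gt (hvpos T)) (ne_of_gt hv0)]
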